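/- Let n ≥ 1 and let M be an invertible real n×n matrix. Then M is ℝ-congruent to an orthogonal matrix if and only if M is ℝ-congruent to a normal matrix (a matrix A with A Aᵀ = Aᵀ A). -/

import Mathlib

open Matrix

private lemma diag_quad {n : ℕ} (S Y : Matrix (Fin n) (Fin n) ℝ) (j : Fin n) :
    (Yᵀ * S * Y) j j = (fun i => Y i j) ⬝ᵥ S *ᵥ (fun i => Y i j) := by
  simp only [Matrix.mul_apply, mulVec, dotProduct, transpose_apply, Finset.mul_sum,
    Finset.sum_mul]
  rw [Finset.sum_comm]
  exact Finset.sum_congr rfl fun a _ => Finset.sum_congr rfl fun b _ => by ring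

private lemma diag_quad_nonneg {n : ℕ} {S : Matrix (Fin n) (Fin n) ℝ} (hS : S.PosSemidef)
    (Y : Matrix (Fin n) (Fin n) ℝ) (j : Fin n) : 0 ≤ (Yᵀ * S * Y) j j := by
  rw [diag_quad]
  simpa using hS.dotProduct_mulVec_nonneg (fun i => Y i j)

private lemma trace_quad_nonneg {n : ℕ} {S : Matrix (Fin n) (Fin n) ℝ} (hS : S.PosSemidef)
    (Y : Matrix (Fin n) (Fin n) ℝ) : 0 ≤ trace (Yᵀ * S * Y) :=
  Finset.sum_nonneg fun j _ => diag_quad_nonneg hS Y j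

private lemma commute_of_commute_sq {n : ℕ} {S B : Matrix (Fin n) (Fin n) ℝ}
    (hS : S.PosSemidef) (hSu : IsUnit S) (h : B * (S * S) = (S * S) * B) :
    B * S = S * B := by
  set X := B * S - S * B with hX
  have key : S * X = -(X * S) := by
    rw [hX, mul_sub, sub_mul, neg_sub]
    have : B * S * S = S * (S * B) := by rw [← mul_assoc, ← h, mul_assoc]
    rw [this]
    noncomm_ring
  have h1 : Xᵀ * S * X = -(Xᵀ * X * S) := by
    rw [mul_assoc, key, mul_assoc]; noncomm_ring
  have ht : trace (Xᵀ * S * X) + trace (Xᵀᵀ * S * Xᵀ) = 0 := by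
    rw [h1, transpose_transpose, trace_neg]
    rw [trace_mul_cycle X S Xᵀ]
    ring
  have h2 : trace (Xᵀ * S * X) = 0 := by
    have := trace_quad_nonneg hS X
    have := trace_quad_nonneg hS Xᵀ
    linarith
  have hcol : ∀ j, (fun i => X i j) = 0 := by
    intro j
    have hdiag : (Xᵀ * S * X) j j = 0 := by
      have := Finset.sum_eq_zero_iff_of_nonneg
        (fun j (_ : j ∈ Finset.univ) => diag_quad_nonneg hS X j) |>.mp h2 j (Finset.mem_univ j)
      exact this
    rw [diag_quad] at hdiag
    have hv : S *ᵥ (fun i => X i j) = 0 := by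
      rw [← hS.dotProduct_mulVec_zero_iff]
      simpa using hdiag
    have : (fun i => X i j) = S⁻¹ *ᵥ (S *ᵥ fun i => X i j) := by
      rw [mulVec_mulVec, Matrix.nonsing_inv_mul S ((Matrix.isUnit_iff_isUnit_det S).mp hSu),
        one_mulVec]
    rw [this, hv, mulVec_zero]
  have hX0 : X = 0 := by
    ext i j
    have := congrFun (hcol j) i
    simpa using this
  have := sub_eq_zero.mp (hX0 ▸ hX.symm)
  exact this.symm ▸ rfl

private lemma commute_inv {n : ℕ} {T A : Matrix (Fin n) (Fin n) ℝ}
    (hTu : IsUnit T) (h : A * T = T * A) : A * T⁻¹ = T⁻¹ * A := by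
  have hd := (Matrix.isUnit_iff_isUnit_det T).mp hTu
  have h1 : T⁻¹ * (A * T) * T⁻¹ = T⁻¹ * (T * A) * T⁻¹ := by rw [h]
  calc A * T⁻¹ = (T⁻¹ * T) * (A * T⁻¹) := by rw [Matrix.nonsing_inv_mul T hd, one_mul]
    _ = T⁻¹ * (T * A) * T⁻¹ := by noncomm_ring
    _ = T⁻¹ * (A * T) * T⁻¹ := by rw [h]
    _ = (T⁻¹ * A) * (T * T⁻¹) := by noncomm_ring
    _ = T⁻¹ * A := by rw [Matrix.mul_nonsing_inv T hd, mul_one]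

open scoped MatrixOrder in
private lemma exists_psd_sqrt {n : ℕ} {P : Matrix (Fin n) (Fin n) ℝ} (hP : P.PosSemidef) :
    ∃ S : Matrix (Fin n) (Fin n) ℝ, S.PosSemidef ∧ S * S = P :=
  ⟨CFC.sqrt P, (CFC.sqrt_nonneg P).posSemidef, CFC.sqrt_mul_sqrt_self P hP.nonneg⟩

theorem stmt_11 (n : ℕ) (hn : 1 ≤ n) (M : Matrix (Fin n) (Fin n) ℝ) (hM : IsUnit M) :
    (∃ C U : Matrix (Fin n) (Fin n) ℝ, IsUnit C ∧ U * Uᵀ = 1 ∧ M = C * U * Cᵀ) ↔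
      (∃ C A : Matrix (Fin n) (Fin n) ℝ, IsUnit C ∧ A * Aᵀ = Aᵀ * A ∧ M = C * A * Cᵀ) := by
  constructor
  · rintro ⟨C, U, hC, hU, hMeq⟩
    exact ⟨C, U, hC, by rw [hU, mul_eq_one_comm.mp hU], hMeq⟩
  · rintro ⟨C, A, hC, hnorm, hMeq⟩
    -- A is invertible
    have hdetA : IsUnit A.det := by
      have := (Matrix.isUnit_iff_isUnit_det _).mp hM
      rw [hMeq, det_mul, det_mul, det_transpose] at this
      exact isUnit_of_mul_isUnit_right (isUnit_of_mul_isUnit_left this)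
    -- A * Aᵀ is positive semidefinite
    have hct : ∀ (B : Matrix (Fin n) (Fin n) ℝ), Bᴴ = Bᵀ := by
      intro B; ext i j; simp [conjTranspose_apply]
    have hP : (A * Aᵀ).PosSemidef := hct A ▸ posSemidef_self_mul_conjTranspose A
    obtain ⟨S, hSps', hSS'⟩ := exists_psd_sqrt hP
    have hSps : S.PosSemidef := hSps'
    have hSS : S * S = A * Aᵀ := hSS'
    have hSsymm : Sᵀ = S := by rw [← hct S]; exact hSps.isHermitian
    have hSu : IsUnit S := by
      rw [Matrix.isUnit_iff_isUnit_det]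
      have : S.det * S.det = A.det * A.det := by
        rw [← det_mul, hSS, det_mul, det_transpose]
      exact isUnit_of_mul_isUnit_left (this ▸ hdetA.mul hdetA)
    have commAS : A * S = S * A := by
      refine commute_of_commute_sq hSps hSu ?_
      rw [hSS]
      calc A * (A * Aᵀ) = A * (Aᵀ * A) := by rw [hnorm]
        _ = A * Aᵀ * A := by rw [mul_assoc]
    obtain ⟨T, hTps', hTT'⟩ := exists_psd_sqrt hSps
    have hTps : T.PosSemidef := hTps'
    have hTT : T * T = S := hTT'
    have hTsymm : Tᵀ = T := by rw [← hct T]; exact hTps.isHermitian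
    have hTu : IsUnit T := by
      rw [Matrix.isUnit_iff_isUnit_det]
      have : T.det * T.det = S.det := by rw [← det_mul, hTT]
      exact isUnit_of_mul_isUnit_left (this ▸ (Matrix.isUnit_iff_isUnit_det S).mp hSu)
    have commAT : A * T = T * A := by
      refine commute_of_commute_sq hTps hTu ?_
      rw [hTT]; exact commAS
    have hdT := (Matrix.isUnit_iff_isUnit_det T).mp hTu
    have hdS := (Matrix.isUnit_iff_isUnit_det S).mp hSu
    have hTiT : T⁻¹ * T = 1 := Matrix.nonsing_inv_mul T hdT
    have hTTi : T * T⁻¹ = 1 := Matrix.mul_nonsing_inv T hdT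
    have hSiS : S⁻¹ * S = 1 := Matrix.nonsing_inv_mul S hdS
    have hTinvT : (T⁻¹)ᵀ = T⁻¹ := by rw [transpose_nonsing_inv, hTsymm]
    have commATi : A * T⁻¹ = T⁻¹ * A := commute_inv hTu commAT
    have commASi : A * S⁻¹ = S⁻¹ * A := commute_inv hSu commAS
    refine ⟨C * T, T⁻¹ * A * T⁻¹, hC.mul hTu, ?_, ?_⟩
    · have hUt : (T⁻¹ * A * T⁻¹)ᵀ = T⁻¹ * Aᵀ * T⁻¹ := by
        rw [transpose_mul, transpose_mul, hTinvT, mul_assoc]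
      rw [hUt]
      have hTiTi : T⁻¹ * T⁻¹ = S⁻¹ := by rw [← Matrix.mul_inv_rev, hTT]
      calc T⁻¹ * A * T⁻¹ * (T⁻¹ * Aᵀ * T⁻¹)
          = T⁻¹ * ((A * (T⁻¹ * T⁻¹)) * (Aᵀ * T⁻¹)) := by noncomm_ring
        _ = T⁻¹ * ((A * S⁻¹) * (Aᵀ * T⁻¹)) := by rw [hTiTi]
        _ = T⁻¹ * ((S⁻¹ * A) * (Aᵀ * T⁻¹)) := by rw [commASi]
        _ = T⁻¹ * (S⁻¹ * (A * Aᵀ) * T⁻¹) := by noncomm_ring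
        _ = T⁻¹ * (S⁻¹ * (S * S) * T⁻¹) := by rw [hSS]
        _ = T⁻¹ * ((S⁻¹ * S) * S * T⁻¹) := by noncomm_ring
        _ = T⁻¹ * (S * T⁻¹) := by rw [hSiS, one_mul]
        _ = T⁻¹ * ((T * T) * T⁻¹) := by rw [hTT]
        _ = (T⁻¹ * T) * (T * T⁻¹) := by noncomm_ring
        _ = 1 := by rw [hTiT, hTTi, one_mul]
    · rw [hMeq, transpose_mul, hTsymm]
      calc C * A * Cᵀ = C * ((T * T⁻¹) * A * (T⁻¹ * T)) * Cᵀ := by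
            rw [hTTi, hTiT, one_mul, mul_one]
        _ = C * T * (T⁻¹ * A * T⁻¹) * (T * Cᵀ) := by noncomm_ring
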